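/- The function h(u) = (u+d)^{α+1} − 2u^{α+1} + (u−d)^{α+1} is nonnegative and decreasing in u on (d, ∞), for every d > 0 and α ∈ (0,1). -/

import Mathlib

open Set Real

private lemma second_diff_nonpos {p : ℝ} (hp0 : 0 ≤ p) (hp1 : p ≤ 1) {u d : ℝ}
    (hd : 0 ≤ d) (hu : d ≤ u) :
    (u + d) ^ p + (u - d) ^ p ≤ 2 * u ^ p := by
  have h := (Real.concaveOn_rpow hp0 hp1).2 (show u - d ∈ Set.Ici (0:ℝ) by simp; linarith)
    (show u + d ∈ Set.Ici (0:ℝ) by simp; linarith)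
    (by norm_num : (0:ℝ) ≤ 1/2) (by norm_num : (0:ℝ) ≤ 1/2) (by norm_num)
  have he : (1/2 : ℝ) • (u - d) + (1/2 : ℝ) • (u + d) = u := by rw [smul_eq_mul, smul_eq_mul]; ring
  rw [he] at h
  simp only [smul_eq_mul] at h
  linarith

private lemma hasDerivAt_h (d α : ℝ) {u : ℝ} (hd : 0 < d) (hα0 : 0 < α) (hu : d < u) :
    HasDerivAt (fun u : ℝ => (u + d) ^ (α + 1) - 2 * u ^ (α + 1) + (u - d) ^ (α + 1))
      ((α + 1) * (u + d) ^ α - 2 * ((α + 1) * u ^ α) + (α + 1) * (u - d) ^ α) u := by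
  have hp : (1 : ℝ) ≤ α + 1 := by linarith
  have h1 : HasDerivAt (fun u : ℝ => (u + d) ^ (α + 1)) ((α + 1) * (u + d) ^ α) u := by
    have := (Real.hasDerivAt_rpow_const (x := u + d) (p := α + 1) (Or.inr hp)).comp u
      ((hasDerivAt_id u).add_const d)
    simpa [add_sub_cancel_right, Function.comp_def] using this
  have h2 : HasDerivAt (fun u : ℝ => u ^ (α + 1)) ((α + 1) * u ^ α) u := by
    simpa [add_sub_cancel_right] using
      (Real.hasDerivAt_rpow_const (x := u) (p := α + 1) (Or.inr hp))
  have h3 : HasDerivAt (fun u : ℝ => (u - d) ^ (α + 1)) ((α + 1) * (u - d) ^ α) u := by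
    have := (Real.hasDerivAt_rpow_const (x := u - d) (p := α + 1) (Or.inr hp)).comp u
      ((hasDerivAt_id u).sub_const d)
    simpa [add_sub_cancel_right, Function.comp_def] using this
  exact (h1.sub (h2.const_mul 2)).add h3

/-- For `d > 0`, `α ∈ (0,1)`, the second difference
`h(u) = (u+d)^{α+1} − 2u^{α+1} + (u−d)^{α+1}` is nonnegative and decreasing on `(d, ∞)`. -/
theorem stmt_17 (d α : ℝ) (hd : 0 < d) (hα0 : 0 < α) (hα1 : α < 1) :
    (∀ u ∈ Set.Ioi d,
        0 ≤ (u + d) ^ (α + 1) - 2 * u ^ (α + 1) + (u - d) ^ (α + 1)) ∧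
    AntitoneOn (fun u : ℝ => (u + d) ^ (α + 1) - 2 * u ^ (α + 1) + (u - d) ^ (α + 1))
      (Set.Ioi d) := by
  constructor
  · intro u hu
    rw [Set.mem_Ioi] at hu
    have h := (convexOn_rpow (p := α + 1) (by linarith)).2 (show u - d ∈ Set.Ici (0:ℝ) by simp; linarith)
      (show u + d ∈ Set.Ici (0:ℝ) by simp; linarith)
      (by norm_num : (0:ℝ) ≤ 1/2) (by norm_num : (0:ℝ) ≤ 1/2) (by norm_num)
    have he : (1/2 : ℝ) • (u - d) + (1/2 : ℝ) • (u + d) = u := by rw [smul_eq_mul, smul_eq_mul]; ring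
    rw [he] at h
    simp only [smul_eq_mul] at h
    linarith
  · apply antitoneOn_of_deriv_nonpos (convex_Ioi d)
    · intro u hu
      rw [Set.mem_Ioi] at hu
      exact ((hasDerivAt_h d α hd hα0 hu).continuousAt).continuousWithinAt
    · intro u hu
      rw [interior_Ioi, Set.mem_Ioi] at hu
      exact (hasDerivAt_h d α hd hα0 hu).differentiableAt.differentiableWithinAt
    · intro u hu
      rw [interior_Ioi, Set.mem_Ioi] at hu
      rw [(hasDerivAt_h d α hd hα0 hu).deriv]
      have h := second_diff_nonpos hα0.le hα1.le hd.le hu.le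
      nlinarith [h, hα0]
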